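/- Let L be a complete lattice and let r : L ∖ {⊥} → ℝ be a completely increasing function, i.e. r is bounded and r(⨆_{k∈K} P_k) = sup_{k∈K} r(P_k) for every nonempty family (P_k)_{k∈K} of elements of L ∖ {⊥}. Then the function f_r : D(L) → ℝ defined by f_r(J) := inf{r(P) | P ∈ J} is an abstract observable function, and f_r(H_P) = r(P) for every P ≠ ⊥. -/

import Mathlib

/-- A dual ideal in a complete lattice: a nonempty subset not containing `⊥`,
closed under binary meets and upward closed. -/
def IsDualIdeal {L : Type*} [CompleteLattice L] (J : Set L) : Prop :=
  J.Nonempty ∧ ⊥ ∉ J ∧ (∀ a ∈ J, ∀ b ∈ J, a ⊓ b ∈ J) ∧ ∀ a ∈ J, ∀ b, a ≤ b → b ∈ J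

/-- An abstract observable function on the dual ideals of a complete lattice:
upper semicontinuous, and satisfying the intersection condition
`f(⋂ S) = sup (f '' S)` for every nonempty family `S` of dual ideals. -/
def IsObservableFunction {L : Type*} [CompleteLattice L] (f : Set L → ℝ) : Prop :=
  (∀ J₀ : Set L, IsDualIdeal J₀ → ∀ ε : ℝ, 0 < ε →
      ∃ P ∈ J₀, ∀ J : Set L, IsDualIdeal J → P ∈ J → f J < f J₀ + ε) ∧
  ∀ S : Set (Set L), S.Nonempty → (∀ J ∈ S, IsDualIdeal J) →
    IsLUB (f '' S) (f (⋂₀ S))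

/-- A bounded completely increasing function `r` on the nonzero elements of a
complete lattice induces an abstract observable function
`f_r(J) := inf {r(P) | P ∈ J}`, and `f_r(H_P) = r(P)` for all `P ≠ ⊥`. -/
theorem stmt15 {L : Type*} [CompleteLattice L] (r : L → ℝ)
    (hbdd : ∃ C : ℝ, ∀ P : L, P ≠ ⊥ → |r P| ≤ C)
    (hci : ∀ S : Set L, S.Nonempty → (∀ P ∈ S, P ≠ ⊥) →
      IsLUB (r '' S) (r (sSup S))) :
    IsObservableFunction (fun J : Set L => sInf (r '' J)) ∧
    ∀ P : L, P ≠ ⊥ → sInf (r '' {b : L | P ≤ b}) = r P := by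
  obtain ⟨C, hC⟩ := hbdd
  -- monotonicity of r on nonzero elements
  have hmono : ∀ P Q : L, P ≠ ⊥ → P ≤ Q → r P ≤ r Q := by
    intro P Q hP hPQ
    have hQ : Q ≠ ⊥ := fun h => hP (le_bot_iff.mp (h ▸ hPQ))
    have h := hci {P, Q} ⟨P, by simp⟩ (by rintro x (rfl | rfl) <;> assumption)
    have hs : sSup ({P, Q} : Set L) = Q := by
      rw [sSup_insert, sSup_singleton, sup_eq_right.mpr hPQ]
    rw [hs] at h
    exact h.1 ⟨P, by simp, rfl⟩
  -- bounded below
  have hbdd' : ∀ J : Set L, ⊥ ∉ J → BddBelow (r '' J) := by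
    intro J hJ
    refine ⟨-C, ?_⟩
    rintro x ⟨P, hP, rfl⟩
    have hne : P ≠ ⊥ := fun h => hJ (h ▸ hP)
    have := (abs_le.mp (hC P hne)).1
    linarith
  refine ⟨⟨?_, ?_⟩, ?_⟩
  · -- upper semicontinuity
    intro J₀ hJ₀ ε hε
    obtain ⟨hne, hbot, _, hup⟩ := hJ₀
    have hne' : (r '' J₀).Nonempty := hne.image r
    obtain ⟨x, hx, hxlt⟩ := exists_lt_of_csInf_lt hne'
      (lt_add_of_pos_right (sInf (r '' J₀)) hε)
    obtain ⟨P, hP, rfl⟩ := hx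
    refine ⟨P, hP, ?_⟩
    intro J hJ hPJ
    have h1 : sInf (r '' J) ≤ r P := csInf_le (hbdd' J hJ.2.1) ⟨P, hPJ, rfl⟩
    exact lt_of_le_of_lt h1 hxlt
  · -- intersection condition
    intro S hS hSd
    have htop : ∀ J ∈ S, (⊤ : L) ∈ J := by
      intro J hJ
      obtain ⟨⟨a, ha⟩, _, _, hup⟩ := hSd J hJ
      exact hup a ha ⊤ le_top
    have hTtop : (⊤ : L) ∈ ⋂₀ S := fun J hJ => htop J hJ
    obtain ⟨J₁, hJ₁⟩ := hS
    have hTbot : (⊥ : L) ∉ ⋂₀ S := fun h => (hSd J₁ hJ₁).2.1 (h J₁ hJ₁)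
    have hTne : (r '' ⋂₀ S).Nonempty := ⟨r ⊤, ⊤, hTtop, rfl⟩
    constructor
    · rintro x ⟨J, hJ, rfl⟩
      exact csInf_le_csInf (hbdd' J (hSd J hJ).2.1) hTne
        (Set.image_mono (f := r) (Set.sInter_subset_of_mem hJ))
    · intro b hb
      refine le_of_forall_pos_le_add ?_
      intro ε hε
      -- choose witnesses in each J
      have hch : ∀ J : S, ∃ p ∈ (J : Set L), r p < b + ε := by
        rintro ⟨J, hJ⟩
        have hle : sInf (r '' J) ≤ b := hb ⟨J, hJ, rfl⟩
        have hne' : (r '' J).Nonempty := (hSd J hJ).1.image r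
        obtain ⟨x, hx, hxlt⟩ := exists_lt_of_csInf_lt hne'
          (lt_of_le_of_lt hle (lt_add_of_pos_right b hε))
        obtain ⟨p, hp, rfl⟩ := hx
        exact ⟨p, hp, hxlt⟩
      choose P hPmem hPlt using hch
      set Q : L := sSup (Set.range P) with hQdef
      have hQmem : Q ∈ ⋂₀ S := by
        intro J hJ
        exact (hSd J hJ).2.2.2 (P ⟨J, hJ⟩) (hPmem ⟨J, hJ⟩) Q
          (le_sSup ⟨⟨J, hJ⟩, rfl⟩)
      have hrange_ne : (Set.range P).Nonempty := ⟨P ⟨J₁, hJ₁⟩, ⟨J₁, hJ₁⟩, rfl⟩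
      have hrange_nb : ∀ p ∈ Set.range P, p ≠ ⊥ := by
        rintro p ⟨j, rfl⟩ h
        exact (hSd j j.2).2.1 (h ▸ hPmem j)
      have hlub := hci (Set.range P) hrange_ne hrange_nb
      have hrQ : r Q ≤ b + ε := by
        refine hlub.2 ?_
        rintro x ⟨p, ⟨j, rfl⟩, rfl⟩
        exact le_of_lt (hPlt j)
      exact le_trans (csInf_le (hbdd' _ hTbot) ⟨Q, hQmem, rfl⟩) hrQ
  · -- f_r (H_P) = r P
    intro P hP
    have hbot : (⊥ : L) ∉ {b : L | P ≤ b} := fun h => hP (le_bot_iff.mp h)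
    refine le_antisymm (csInf_le (hbdd' _ hbot) ⟨P, le_refl P, rfl⟩) ?_
    refine le_csInf ⟨r P, P, le_refl P, rfl⟩ ?_
    rintro x ⟨b, hb, rfl⟩
    exact hmono P b hP hb
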